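/- Let p ∈ (0,1) and x* ∈ (-1,0) with F(x*) > 0. Define A(D) = (1/2)·(γ_G+γ_B)·D + (1/2)·(1−γ_B)·y, g(x) = (1/2)·(−x)·((1−τ)·(1−κ)·L_B − (1−γ_B)·y) for x ≤ 0 and g(x) = (1/2)·x·((1−γ_G)·y + (1−τ)·(1−κ)·L_G) for x > 0, V_∅(D₀) = ∫_{-1}^{1} (A(D₀) + g(x))·f(x) dx, and V_w(D₀) = (1/F(x*))·∫_{-1}^{x*} (A(D₀) + g(x))·f(x) dx. Suppose D₀ satisfies the lender's break-even condition (1−p)·V_∅(D₀) + p·F(x*)·V_w(D₀) = (1 − p + p·F(x*))·K and D₁ satisfies A(D₁) = K. Then D₀ > D₁, and moreover V_∅(D₀) > K. -/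

import Mathlib

open MeasureTheory

set_option maxHeartbeats 1000000 in
/-- Under the lender's break-even conditions, the no-disclosure face value
exceeds the disclosure face value (D₀ > D₁), and the lender's expected payoff
conditional on the manager being uninformed exceeds the principal (V_∅(D₀) > K). -/
theorem stmt_4 (f F : ℝ → ℝ)
    (hf_nonneg : ∀ x, 0 ≤ f x)
    (hf_supp : ∀ x : ℝ, x ∉ Set.Icc (-1 : ℝ) 1 → f x = 0)
    (hf_total : (∫ x in (-1 : ℝ)..1, f x) = 1)
    (hf_symm : ∀ x, f x = f (-x))
    (hf_cont : Continuous f)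
    (hf_pos : ∀ x ∈ Set.Ioo (-1 : ℝ) 1, 0 < f x)
    (hF : ∀ x, F x = ∫ t in (-1 : ℝ)..x, f t)
    (γB γG y X τ κ LG LB K p xstar D₀ D₁ : ℝ)
    (hγB : 0 ≤ γB) (hγ : γB < γG) (hγG : γG < 1)
    (hy : 0 < y) (hX : 0 < X) (hτ0 : 0 ≤ τ) (hτ1 : τ ≤ 1)
    (hκ0 : 0 < κ) (hκ1 : κ < 1)
    (hLG : LG = X - (1 - γG) * y) (hLGpos : 0 < LG)
    (hLB : LB = (1 - γB) * y - X) (hLBpos : 0 < LB)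
    (hp : p ∈ Set.Ioo (0 : ℝ) 1) (hx : xstar ∈ Set.Ioo (-1 : ℝ) 0)
    (hFpos : 0 < F xstar)
    (A g Vempty Vw : ℝ → ℝ)
    (hA : ∀ D, A D = (1/2) * (γG + γB) * D + (1/2) * (1 - γB) * y)
    (hg : ∀ x : ℝ, g x = if x ≤ 0
      then (1/2) * (-x) * ((1-τ)*(1-κ)*LB - (1-γB)*y)
      else (1/2) * x * ((1-γG)*y + (1-τ)*(1-κ)*LG))
    (hVempty : ∀ D, Vempty D = ∫ x in (-1 : ℝ)..1, (A D + g x) * f x)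
    (hVw : ∀ D, Vw D = (1 / F xstar) * ∫ x in (-1 : ℝ)..xstar, (A D + g x) * f x)
    (hbe0 : (1 - p) * Vempty D₀ + p * F xstar * Vw D₀ = (1 - p + p * F xstar) * K)
    (hbe1 : A D₁ = K) :
    D₀ > D₁ ∧ Vempty D₀ > K := by
  obtain ⟨hp0, hp1⟩ := hp
  obtain ⟨hx1, hx0⟩ := hx
  set cB : ℝ := (1-τ)*(1-κ)*LB - (1-γB)*y with hcBdef
  set cG : ℝ := (1-γG)*y + (1-τ)*(1-κ)*LG with hcGdef
  clear_value cB cG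
  have hτκ : 0 ≤ (1-τ)*(1-κ) :=
    mul_nonneg (by linarith only [hτ1]) (by linarith only [hκ1])
  have hτκ1 : (1-τ)*(1-κ) ≤ 1 := by
    have h := mul_le_mul_of_nonneg_right (show 1-τ ≤ 1 by linarith only [hτ0])
      (show (0:ℝ) ≤ 1-κ by linarith only [hκ1])
    linarith only [h, hκ0]
  have hcB : cB < 0 := by
    have h1 : (1-τ)*(1-κ)*LB ≤ 1*LB := mul_le_mul_of_nonneg_right hτκ1 hLBpos.le
    have h2 : LB < (1-γB)*y := by rw [hLB]; linarith only [hX]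
    rw [hcBdef]; linarith only [h1, h2]
  have hcG : 0 < cG := by
    have h1 : 0 < (1-γG)*y := mul_pos (by linarith only [hγG]) hy
    have h2 : 0 ≤ (1-τ)*(1-κ)*LG := mul_nonneg hτκ hLGpos.le
    rw [hcGdef]; linarith only [h1, h2]
  have hgy : 0 ≤ (γG-γB)*y := mul_nonneg (by linarith only [hγ]) hy.le
  have hsum : cG + cB ≤ 0 := by
    have hkey : (1-τ)*(1-κ)*((γG-γB)*y) ≤ 1*((γG-γB)*y) :=
      mul_le_mul_of_nonneg_right hτκ1 hgy
    rw [hcGdef, hcBdef, hLG, hLB]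
    linarith only [hkey]
  -- closed form for g
  have hg' : g = fun x => (1/2) * (-(min x 0) * cB + (max x 0) * cG) := by
    funext x
    rw [hg]
    split_ifs with h
    · rw [min_eq_left h, max_eq_right h]; ring
    · push_neg at h
      rw [min_eq_right h.le, max_eq_left h.le]; ring
  have hgcont : Continuous g := by
    rw [hg']; fun_prop
  have hgmono : ∀ a b : ℝ, a ≤ b → g a ≤ g b := by
    intro a b hab
    rw [hg']
    have h1 : min a 0 ≤ min b 0 := min_le_min hab le_rfl
    have h2 : max a 0 ≤ max b 0 := max_le_max hab le_rfl
    have h3 : min a 0 * (-cB) ≤ min b 0 * (-cB) :=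
      mul_le_mul_of_nonneg_right h1 (by linarith only [hcB])
    have h4 : max a 0 * cG ≤ max b 0 * cG :=
      mul_le_mul_of_nonneg_right h2 hcG.le
    simp only
    linarith only [h3, h4]
  have hfi : ∀ a b : ℝ, IntervalIntegrable f volume a b :=
    fun a b => hf_cont.intervalIntegrable a b
  have hgfi : ∀ a b : ℝ, IntervalIntegrable (fun x => g x * f x) volume a b :=
    fun a b => (hgcont.mul hf_cont).intervalIntegrable a b
  set G : ℝ := ∫ x in (-1:ℝ)..1, g x * f x with hGdef
  set Gw : ℝ := ∫ x in (-1:ℝ)..xstar, g x * f x with hGwdef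
  set R : ℝ := ∫ x in xstar..(1:ℝ), g x * f x with hRdef
  clear_value G Gw R
  have hsplitGen : ∀ (D a b : ℝ), (∫ x in a..b, (A D + g x) * f x)
      = A D * (∫ x in a..b, f x) + ∫ x in a..b, g x * f x := by
    intro D a b
    have h : ∀ x, (A D + g x) * f x = A D * f x + g x * f x := fun x => by ring
    simp_rw [h]
    rw [intervalIntegral.integral_add (f := fun x => A D * f x) ((continuous_const.mul hf_cont).intervalIntegrable a b) (hgfi a b),
      intervalIntegral.integral_const_mul]
  have hVe : Vempty D₀ = A D₀ + G := by
    rw [hVempty, hsplitGen, hf_total, ← hGdef]; ring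
  have hFne : F xstar ≠ 0 := ne_of_gt hFpos
  have hVwval : Vw D₀ = (1 / F xstar) * (A D₀ * F xstar + Gw) := by
    rw [hVw, hsplitGen, ← hF, ← hGwdef]
  have hVw2 : F xstar * Vw D₀ = A D₀ * F xstar + Gw := by
    rw [hVwval]; field_simp
  have hS : 0 < 1 - p + p * F xstar := by
    have h := mul_pos hp0 hFpos
    linarith only [h, hp1]
  have key : (1 - p + p * F xstar) * A D₀ + (1-p) * G + p * Gw
      = (1 - p + p * F xstar) * K := by
    linear_combination hbe0 - (1-p)*hVe - p*hVw2
  -- F xstar < 1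
  have hFsplit : F xstar + (∫ x in xstar..(1:ℝ), f x) = 1 := by
    have hadj := intervalIntegral.integral_add_adjacent_intervals (a := (-1:ℝ)) (b := xstar)
      (c := (1:ℝ)) (hfi _ _) (hfi _ _)
    rw [hF xstar]
    linarith only [hadj, hf_total]
  have htail : 0 < ∫ x in xstar..(1:ℝ), f x := by
    apply intervalIntegral.intervalIntegral_pos_of_pos_on (hfi _ _) _ (by linarith only [hx0])
    intro x hxx
    exact hf_pos x ⟨lt_of_le_of_lt (le_of_lt hx1) hxx.1, hxx.2⟩
  have hF1 : F xstar < 1 := by linarith only [hFsplit, htail]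
  -- g xstar < 0
  have hgx : g xstar = (1/2) * (-xstar) * cB := by
    rw [hg, if_pos (le_of_lt hx0)]
  have hgxneg : g xstar < 0 := by
    have hh := mul_pos (show (0:ℝ) < -xstar by linarith only [hx0])
      (show (0:ℝ) < -cB by linarith only [hcB])
    rw [hgx]; linarith only [hh]
  -- Gw < g xstar * F xstar
  have hgwconst : (∫ x in (-1:ℝ)..xstar, g xstar * f x) = g xstar * F xstar := by
    rw [intervalIntegral.integral_const_mul, ← hF]
  have hdiffpos : 0 < ∫ x in (-1:ℝ)..xstar, (g xstar - g x) * f x := by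
    apply intervalIntegral.intervalIntegral_pos_of_pos_on
    · exact ((continuous_const.sub hgcont).mul hf_cont).intervalIntegrable _ _
    · intro x hxx
      have hfx : 0 < f x := hf_pos x ⟨hxx.1, by linarith only [hxx.2, hx0]⟩
      have hgl : g x < g xstar := by
        have hxle : x ≤ 0 := by linarith only [hxx.2, hx0]
        rw [hg x, hg xstar, if_pos hxle, if_pos hx0.le]
        have h3 : xstar * cB < x * cB := mul_lt_mul_of_neg_right hxx.2 hcB
        linarith only [h3]
      exact mul_pos (by linarith only [hgl]) hfx
    · exact hx1
  have hGw_lt : Gw < g xstar * F xstar := by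
    have hsub : (∫ x in (-1:ℝ)..xstar, (g xstar - g x) * f x)
        = g xstar * F xstar - Gw := by
      have h : ∀ x, (g xstar - g x) * f x = g xstar * f x - g x * f x := fun x => by ring
      simp_rw [h]
      rw [intervalIntegral.integral_sub (f := fun x => g xstar * f x) ((continuous_const.mul hf_cont).intervalIntegrable _ _) (hgfi _ _), hgwconst, ← hGwdef]
    have h9 := hdiffpos
    rw [hsub] at h9
    linarith only [h9]
  have hGwneg : Gw < 0 :=
    lt_trans hGw_lt (mul_neg_of_neg_of_pos hgxneg hFpos)
  -- R ≥ g xstar * (1 - F xstar)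
  have hRconst : (∫ x in xstar..(1:ℝ), g xstar * f x) = g xstar * (1 - F xstar) := by
    rw [intervalIntegral.integral_const_mul]
    have h : (∫ x in xstar..(1:ℝ), f x) = 1 - F xstar := by linarith only [hFsplit]
    rw [h]
  have hR_ge : g xstar * (1 - F xstar) ≤ R := by
    have hnn : 0 ≤ ∫ x in xstar..(1:ℝ), (g x - g xstar) * f x := by
      apply intervalIntegral.integral_nonneg (by linarith only [hx0])
      intro u hu
      exact mul_nonneg (by linarith only [hgmono xstar u hu.1]) (hf_nonneg u)
    have hsub : (∫ x in xstar..(1:ℝ), (g x - g xstar) * f x)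
        = R - g xstar * (1 - F xstar) := by
      have h : ∀ x, (g x - g xstar) * f x = g x * f x - g xstar * f x := fun x => by ring
      simp_rw [h]
      rw [intervalIntegral.integral_sub (g := fun x => g xstar * f x) (hgfi _ _) ((continuous_const.mul hf_cont).intervalIntegrable _ _), hRconst, ← hRdef]
    rw [hsub] at hnn
    linarith only [hnn]
  have hGsplit : G = Gw + R := by
    rw [hGdef, hGwdef, hRdef]
    exact (intervalIntegral.integral_add_adjacent_intervals (hgfi _ _) (hgfi _ _)).symm
  -- G ≤ 0 by symmetry
  have hGle : G ≤ 0 := by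
    have hsplit2 : (∫ x in (-1:ℝ)..0, g x * f x) + (∫ x in (0:ℝ)..1, g x * f x) = G := by
      rw [hGdef]
      exact intervalIntegral.integral_add_adjacent_intervals (hgfi _ _) (hgfi _ _)
    have hneg : (∫ x in (-1:ℝ)..0, g x * f x) = ∫ x in (0:ℝ)..1, g (-x) * f x := by
      have hcomp := intervalIntegral.integral_comp_neg (a := (0:ℝ)) (b := 1) (fun x => g x * f x)
      simp only [neg_zero] at hcomp
      rw [← hcomp]
      apply intervalIntegral.integral_congr
      intro x _
      simp only
      rw [← hf_symm]
    have hI1 : IntervalIntegrable (fun x => g (-x) * f x) volume 0 1 :=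
      ((show Continuous fun x => g (-x) * f x from (hgcont.comp continuous_neg).mul hf_cont)).intervalIntegrable 0 1
    have hcomb : G = ∫ x in (0:ℝ)..1, (g (-x) * f x + g x * f x) := by
      rw [← hsplit2, hneg]
      exact (intervalIntegral.integral_add hI1 (hgfi _ _)).symm
    rw [hcomb]
    have hle : ∀ u ∈ Set.Icc (0:ℝ) 1, 0 ≤ -(g (-u) * f u + g u * f u) := by
      intro u hu
      have hu0 : 0 ≤ u := hu.1
      have hsum2 : g (-u) + g u = (1/2) * u * (cB + cG) := by
        rw [hg (-u), hg u]
        rcases lt_or_eq_of_le hu0 with h | h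
        · rw [if_pos (by linarith only [h] : -u ≤ 0), if_neg (by linarith only [h] : ¬ u ≤ 0)]
          ring
        · rw [← h]; norm_num
      have h1 : g (-u) + g u ≤ 0 := by
        have hh0 := mul_nonpos_of_nonneg_of_nonpos hu0 (show cB + cG ≤ 0 by linarith only [hsum])
        rw [hsum2]; linarith only [hh0]
      have h2 := mul_nonpos_of_nonpos_of_nonneg h1 (hf_nonneg u)
      linarith only [h2]
    have hnn := intervalIntegral.integral_nonneg (μ := volume) (a := (0:ℝ)) (b := 1) (by norm_num) hle
    rw [intervalIntegral.integral_neg] at hnn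
    linarith only [hnn]
  -- conclusions
  have h1 : (1-p)*G ≤ 0 := mul_nonpos_of_nonneg_of_nonpos (by linarith only [hp1]) hGle
  have h2 : p*Gw < 0 := mul_neg_of_pos_of_neg hp0 hGwneg
  have hAD : A D₀ > K := by
    have h6 : 0 < (1 - p + p * F xstar) * (A D₀ - K) := by
      have hid0 : (1 - p + p * F xstar) * (A D₀ - K) = -((1-p)*G + p*Gw) := by
        linear_combination key
      rw [hid0]; linarith only [h1, h2]
    by_contra h
    push_neg at h
    have h7 := mul_nonpos_of_nonneg_of_nonpos hS.le (show A D₀ - K ≤ 0 by linarith only [h])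
    linarith only [h6, h7]
  constructor
  · have hAe : A D₀ - A D₁ = (1/2) * (γG + γB) * (D₀ - D₁) := by rw [hA, hA]; ring
    by_contra hcon
    push_neg at hcon
    have hle2 : (1/2) * (γG + γB) * (D₀ - D₁) ≤ 0 :=
      mul_nonpos_of_nonneg_of_nonpos (by linarith only [hγB, hγ]) (by linarith only [hcon])
    linarith only [hAe, hbe1, hAD, hle2]
  · have hFG : 0 < F xstar * G - Gw := by
      have hA1 : 0 < (1 - F xstar) * (g xstar * F xstar - Gw) :=
        mul_pos (by linarith only [hF1]) (by linarith only [hGw_lt])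
      have hA2 : 0 ≤ F xstar * (R - g xstar * (1 - F xstar)) :=
        mul_nonneg hFpos.le (by linarith only [hR_ge])
      rw [hGsplit]
      linarith only [hA1, hA2]
    have hid : (1 - p + p * F xstar) * (A D₀ + G - K) = p * (F xstar * G - Gw) := by
      linear_combination key
    have hpos2 : 0 < p * (F xstar * G - Gw) := mul_pos hp0 hFG
    rw [hVe]
    by_contra h
    push_neg at h
    have h7 := mul_nonpos_of_nonneg_of_nonpos hS.le (show A D₀ + G - K ≤ 0 by linarith only [h])
    linarith only [hpos2, hid, h7]
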